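/- Prefix-free complexity is subadditive: there exists k ∈ ℕ such that for all binary strings a, b, K(a ⋆ b) ≤ K(a) + K(b) + k. -/

import Mathlib

open MeasureTheory
open scoped ENNReal

/-- The length-`n` initial segment of an infinite binary sequence. -/
def pref (x : ℕ → Bool) (n : ℕ) : List Bool := List.ofFn (fun i : Fin n => x i)

/-- A set of binary strings is prefix-free if no member is a proper prefix of another. -/
def PFree (S : Set (List Bool)) : Prop := ∀ a ∈ S, ∀ b ∈ S, a <+: b → a = b

/-- Kolmogorov complexity of `b` relative to machine `M`: the least length of an
input mapped by `M` to `b`, `∞` if there is none. -/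
noncomputable def Cpx (M : List Bool →. List Bool) (b : List Bool) : ℕ∞ :=
  sInf {n : ℕ∞ | ∃ p : List Bool, b ∈ M p ∧ (p.length : ℕ∞) = n}

/-- A universal machine for plain complexity. -/
def Universal (U : List Bool →. List Bool) : Prop :=
  Partrec U ∧ ∀ L : List Bool →. List Bool, Partrec L →
    ∃ k : ℕ, ∀ b : List Bool, Cpx U b ≤ Cpx L b + (k : ℕ∞)

/-- A prefix-free universal machine: prefix-free domain, universal among machines
with prefix-free domain. -/
def PFUniversal (V : List Bool →. List Bool) : Prop :=
  Partrec V ∧ PFree {p | (V p).Dom} ∧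
    ∀ L : List Bool →. List Bool, Partrec L → PFree {p | (L p).Dom} →
      ∃ k : ℕ, ∀ b : List Bool, Cpx V b ≤ Cpx L b + (k : ℕ∞)

/-- `cyl S` is the set of infinite binary sequences extending some member of `S`. -/
def cyl (S : Set (List Bool)) : Set (ℕ → Bool) := {x | ∃ b ∈ S, pref x b.length = b}

/-- The `e`-th computably enumerable set of binary strings. -/
def W (e : ℕ) : Set (List Bool) :=
  {b | ((Denumerable.ofNat Nat.Partrec.Code e).eval (Encodable.encode b)).Dom}

/-- The binary-digit expansion of a real number. -/
noncomputable def binSeq (r : ℝ) : ℕ → Bool := fun n => decide (⌊r * 2 ^ (n + 1)⌋ % 2 = 1)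

/-- The fair-coin (uniform product) measure on Cantor space, as the pushforward of
Lebesgue measure on `(0,1]` under binary expansion. -/
noncomputable def coin : Measure (ℕ → Bool) :=
  Measure.map binSeq (volume.restrict (Set.Ioc (0 : ℝ) 1))

/-- Martin-Löf test in sense 2. -/
def MLTest (f : ℕ → ℕ) : Prop :=
  Computable f ∧ ∀ n : ℕ, coin (cyl (W (f n))) ≤ (2 : ℝ≥0∞)⁻¹ ^ n

/-- `x` fails the sense-2 test `f`. -/
def Fails (x : ℕ → Bool) (f : ℕ → ℕ) : Prop := ∀ n : ℕ, x ∈ cyl (W (f n))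

/-- Martin-Löf randomness (sense 2). -/
def MLRandom (x : ℕ → Bool) : Prop := ∀ f : ℕ → ℕ, MLTest f → ¬ Fails x f

/-- The dyadic rational value of a finite binary string. -/
noncomputable def sval (b : List Bool) : ℝ :=
  ∑ i : Fin b.length, if b.get i then ((2 : ℝ))⁻¹ ^ (i.val + 1) else 0

/-- Chaitin's halting probability of machine `V`. -/
noncomputable def Omega (V : List Bool →. List Bool) : ℝ :=
  ∑' p : {p : List Bool // (V p).Dom}, ((2 : ℝ))⁻¹ ^ (p.val.length)

/-- Martin-Löf test in sense 1. -/
def MLTest1 (t : List Bool →. ℕ) : Prop :=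
  Partrec t ∧ ∀ m : ℕ, coin (cyl {b | ∃ v ∈ t b, m ≤ v}) ≤ (2 : ℝ≥0∞)⁻¹ ^ m

/-- `x` passes the sense-1 test `t`: the values of `t` on `x`'s prefixes are bounded. -/
def Passes1 (x : ℕ → Bool) (t : List Bool →. ℕ) : Prop :=
  ∃ B : ℕ, ∀ (n : ℕ) (v : ℕ), v ∈ t (pref x n) → v ≤ B

/-- A set of binary strings is computably enumerable. -/
def CE (S : Set (List Bool)) : Prop :=
  ∃ f : List Bool →. ℕ, Partrec f ∧ S = {b | (f b).Dom}

open Encodable Nat.Partrec.Code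

/-- helper machine: split input into two halves, run `c` on both, append results. -/
def gfun (c : Nat.Partrec.Code) (p : List Bool) (n : ℕ) : Option (List Bool) :=
  (decode (α := List Bool × List Bool) n.unpair.2).bind fun pq =>
    if pq.1 ++ pq.2 = p then
      ((evaln n.unpair.1 c (encode pq.1)).bind (decode (α := List Bool))).bind fun a =>
        ((evaln n.unpair.1 c (encode pq.2)).bind (decode (α := List Bool))).map fun b => a ++ b
    else none

def Lmach (c : Nat.Partrec.Code) : List Bool →. List Bool :=
  fun p => Nat.rfindOpt (gfun c p)

theorem gfun_primrec (c : Nat.Partrec.Code) : Primrec₂ (gfun c) := by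
  have hdec : Primrec fun a : List Bool × ℕ =>
      (decode (α := List Bool × List Bool) a.2.unpair.2) :=
    Primrec.decode.comp (Primrec.snd.comp (Primrec.unpair.comp Primrec.snd))
  have hcond : PrimrecPred fun a : (List Bool × ℕ) × (List Bool × List Bool) =>
      a.2.1 ++ a.2.2 = a.1.1 :=
    Primrec.eq.comp
      (Primrec.list_append.comp (Primrec.fst.comp Primrec.snd) (Primrec.snd.comp Primrec.snd))
      (Primrec.fst.comp Primrec.fst)
  have ho1 : Primrec fun a : (List Bool × ℕ) × (List Bool × List Bool) =>
      (evaln a.1.2.unpair.1 c (encode a.2.1)).bind (decode (α := List Bool)) :=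
    Primrec.option_bind
      (primrec_evaln.comp
        (((Primrec.fst.comp (Primrec.unpair.comp (Primrec.snd.comp Primrec.fst))).pair
          (Primrec.const c)).pair (Primrec.encode.comp (Primrec.fst.comp Primrec.snd))))
      ((Primrec.decode.comp Primrec.snd).to₂)
  have ho2 : Primrec fun a : (List Bool × ℕ) × (List Bool × List Bool) =>
      (evaln a.1.2.unpair.1 c (encode a.2.2)).bind (decode (α := List Bool)) :=
    Primrec.option_bind
      (primrec_evaln.comp
        (((Primrec.fst.comp (Primrec.unpair.comp (Primrec.snd.comp Primrec.fst))).pair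
          (Primrec.const c)).pair (Primrec.encode.comp (Primrec.snd.comp Primrec.snd))))
      ((Primrec.decode.comp Primrec.snd).to₂)
  have hmap : Primrec fun x : ((List Bool × ℕ) × (List Bool × List Bool)) × List Bool =>
      ((evaln x.1.1.2.unpair.1 c (encode x.1.2.2)).bind (decode (α := List Bool))).map
        fun b => x.2 ++ b :=
    Primrec.option_map (ho2.comp Primrec.fst)
      ((Primrec.list_append.comp (Primrec.snd.comp Primrec.fst) Primrec.snd).to₂)
  have hbranch : Primrec fun a : (List Bool × ℕ) × (List Bool × List Bool) =>
      ((evaln a.1.2.unpair.1 c (encode a.2.1)).bind (decode (α := List Bool))).bind fun x =>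
        ((evaln a.1.2.unpair.1 c (encode a.2.2)).bind (decode (α := List Bool))).map
          fun b => x ++ b :=
    Primrec.option_bind ho1 hmap.to₂
  exact (Primrec.option_bind hdec
    ((Primrec.ite hcond hbranch (Primrec.const none)).to₂)).to₂

theorem Lmach_partrec (c : Nat.Partrec.Code) : Partrec (Lmach c) :=
  Partrec.rfindOpt (gfun_primrec c).to_comp

theorem prefix_comparable {α} {l₁ l₂ l₃ : List α} (h1 : l₁ <+: l₃) (h2 : l₂ <+: l₃) :
    l₁ <+: l₂ ∨ l₂ <+: l₁ := by
  rcases le_total l₁.length l₂.length with h | h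
  · left
    rw [List.prefix_iff_eq_take.mp h1, List.prefix_iff_eq_take.mp h2]
    exact List.take_prefix_take_left h
  · right
    rw [List.prefix_iff_eq_take.mp h2, List.prefix_iff_eq_take.mp h1]
    exact List.take_prefix_take_left h

/-- Prefix-free complexity is subadditive: `K(a ⋆ b) ≤ K(a) + K(b) + k`. -/
theorem stmt11 (V : List Bool →. List Bool) (hV : PFUniversal V) :
    ∃ k : ℕ, ∀ a b : List Bool, Cpx V (a ++ b) ≤ Cpx V a + Cpx V b + (k : ℕ∞) := by
  obtain ⟨hVpr, hpf, huniv⟩ := hV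
  obtain ⟨c, hc⟩ := Nat.Partrec.Code.exists_code.1 hVpr
  have hev : ∀ (q y : List Bool), encode y ∈ c.eval (encode q) ↔ y ∈ V q := by
    intro q y; rw [hc]; simp [encodek]
  have hev' : ∀ (q : List Bool) (x : ℕ), x ∈ c.eval (encode q) → ∃ y ∈ V q, encode y = x := by
    intro q x hx; rw [hc] at hx; simpa [encodek] using hx
  have hmemg : ∀ (p : List Bool) (n : ℕ) (x : List Bool), gfun c p n = some x →
      ∃ p₁ p₂ : List Bool, p₁ ++ p₂ = p ∧ ∃ a ∈ V p₁, ∃ b ∈ V p₂, x = a ++ b := by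
    intro p n x hx
    unfold gfun at hx
    rcases Option.bind_eq_some_iff.mp hx with ⟨pq, hdec, hx⟩
    split at hx
    case isTrue hpq =>
      rcases Option.bind_eq_some_iff.mp hx with ⟨a, ha, hx⟩
      rcases Option.bind_eq_some_iff.mp ha with ⟨xa, hxa, hda⟩
      rcases Option.map_eq_some_iff.mp hx with ⟨b, hb, rfl⟩
      rcases Option.bind_eq_some_iff.mp hb with ⟨xb, hxb, hdb⟩
      obtain ⟨ya, hya, hyae⟩ := hev' _ _ (evaln_sound (Option.mem_def.mpr hxa))
      obtain ⟨yb, hyb, hybe⟩ := hev' _ _ (evaln_sound (Option.mem_def.mpr hxb))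
      subst hyae; subst hybe
      simp only [encodek, Option.some_inj] at hda hdb
      exact ⟨pq.1, pq.2, hpq, a, hda ▸ hya, b, hdb ▸ hyb, rfl⟩
    case isFalse => simp at hx
  have hexg : ∀ (p₁ p₂ a b : List Bool), a ∈ V p₁ → b ∈ V p₂ →
      ∃ n, gfun c (p₁ ++ p₂) n = some (a ++ b) := by
    intro p₁ p₂ a b ha hb
    obtain ⟨s₁, hs₁⟩ := evaln_complete.mp ((hev _ _).mpr ha)
    obtain ⟨s₂, hs₂⟩ := evaln_complete.mp ((hev _ _).mpr hb)
    refine ⟨Nat.pair (max s₁ s₂) (encode (p₁, p₂)), ?_⟩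
    have h1 : evaln (max s₁ s₂) c (encode p₁) = some (encode a) :=
      evaln_mono (le_max_left _ _) hs₁
    have h2 : evaln (max s₁ s₂) c (encode p₂) = some (encode b) :=
      evaln_mono (le_max_right _ _) hs₂
    simp [gfun, Nat.unpair_pair, encodek, h1, h2]
  have hLdom : ∀ p : List Bool, (Lmach c p).Dom ↔
      ∃ p₁ p₂ : List Bool, p₁ ++ p₂ = p ∧ (V p₁).Dom ∧ (V p₂).Dom := by
    intro p
    rw [show (Lmach c p) = Nat.rfindOpt (gfun c p) from rfl, Nat.rfindOpt_dom]
    constructor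
    · rintro ⟨n, x, hx⟩
      obtain ⟨p₁, p₂, hpq, a, ha, b, hb, rfl⟩ := hmemg p n x (Option.mem_def.mp hx)
      exact ⟨p₁, p₂, hpq, Part.dom_iff_mem.mpr ⟨a, ha⟩, Part.dom_iff_mem.mpr ⟨b, hb⟩⟩
    · rintro ⟨p₁, p₂, rfl, h1, h2⟩
      obtain ⟨a, ha⟩ := Part.dom_iff_mem.mp h1
      obtain ⟨b, hb⟩ := Part.dom_iff_mem.mp h2
      obtain ⟨n, hn⟩ := hexg p₁ p₂ a b ha hb
      exact ⟨n, a ++ b, Option.mem_def.mpr hn⟩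
  have hLpf : PFree {p | (Lmach c p).Dom} := by
    intro p hp q hq hpre
    obtain ⟨p₁, p₂, hp12, hd1, hd2⟩ := (hLdom p).mp hp
    obtain ⟨q₁, q₂, hq12, he1, he2⟩ := (hLdom q).mp hq
    have h1p : p₁ <+: p := by rw [← hp12]; exact List.prefix_append _ _
    have h1 : p₁ <+: q := h1p.trans hpre
    have h2 : q₁ <+: q := by rw [← hq12]; exact List.prefix_append _ _
    have h12 : p₁ = q₁ := by
      rcases prefix_comparable h1 h2 with h | h
      · exact hpf p₁ hd1 q₁ he1 h
      · exact (hpf q₁ he1 p₁ hd1 h).symm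
    subst hp12; subst hq12; subst h12
    have h22 : p₂ <+: q₂ := (List.prefix_append_right_inj p₁).mp hpre
    rw [hpf p₂ hd2 q₂ he2 h22]
  have hval : ∀ (p q a b : List Bool), a ∈ V p → b ∈ V q → a ++ b ∈ Lmach c (p ++ q) := by
    intro p q a b ha hb
    obtain ⟨n, hn⟩ := hexg p q a b ha hb
    have hdom : (Lmach c (p ++ q)).Dom := Nat.rfindOpt_dom.mpr ⟨n, _, Option.mem_def.mpr hn⟩
    obtain ⟨y, hy⟩ := Part.dom_iff_mem.mp hdom
    obtain ⟨m, hm⟩ := Nat.rfindOpt_spec hy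
    obtain ⟨p₁, p₂, hpq, a', ha', b', hb', rfl⟩ := hmemg _ _ _ (Option.mem_def.mp hm)
    have hp1 : p₁ = p := by
      have h1 : p₁ <+: p ++ q := by rw [← hpq]; exact List.prefix_append _ _
      have h2 : p <+: p ++ q := List.prefix_append p q
      have hd1 : p₁ ∈ {r | (V r).Dom} := Part.dom_iff_mem.mpr ⟨a', ha'⟩
      have hd2 : p ∈ {r | (V r).Dom} := Part.dom_iff_mem.mpr ⟨a, ha⟩
      rcases prefix_comparable h1 h2 with h | h
      · exact hpf _ hd1 _ hd2 h
      · exact (hpf _ hd2 _ hd1 h).symm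
    subst hp1
    have hp2 : p₂ = q := List.append_cancel_left hpq
    subst hp2
    have e1 : a' = a := Part.mem_unique ha' ha
    have e2 : b' = b := Part.mem_unique hb' hb
    subst e1; subst e2
    exact hy
  have hwit : ∀ bb : List Bool, Cpx V bb ≠ ⊤ →
      ∃ p : List Bool, bb ∈ V p ∧ (p.length : ℕ∞) ≤ Cpx V bb := by
    intro bb h
    obtain ⟨m, hm⟩ := WithTop.ne_top_iff_exists.mp h
    have hlt : Cpx V bb < ((m + 1 : ℕ) : ℕ∞) := by
      rw [← hm]; exact Nat.cast_lt.mpr (Nat.lt_succ_self m)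
    simp only [Cpx] at hlt
    obtain ⟨x, hx, hxlt⟩ := sInf_lt_iff.mp hlt
    obtain ⟨p, hp, rfl⟩ := hx
    refine ⟨p, hp, ?_⟩
    rw [← hm]
    exact Nat.cast_le.mpr (Nat.lt_succ_iff.mp (Nat.cast_lt.mp hxlt))
  obtain ⟨k, hk⟩ := huniv (Lmach c) (Lmach_partrec c) hLpf
  refine ⟨k, fun a b => ?_⟩
  by_cases ha : Cpx V a = ⊤
  · simp [ha]
  by_cases hb : Cpx V b = ⊤
  · simp [hb]
  obtain ⟨p, hp, hpl⟩ := hwit a ha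
  obtain ⟨q, hq, hql⟩ := hwit b hb
  have h1 : Cpx (Lmach c) (a ++ b) ≤ ((p ++ q).length : ℕ∞) :=
    sInf_le ⟨p ++ q, hval p q a b hp hq, rfl⟩
  calc Cpx V (a ++ b) ≤ Cpx (Lmach c) (a ++ b) + (k : ℕ∞) := hk _
    _ ≤ ((p ++ q).length : ℕ∞) + (k : ℕ∞) := add_le_add_left h1 _
    _ ≤ Cpx V a + Cpx V b + (k : ℕ∞) := by
        refine add_le_add_left ?_ _
        rw [List.length_append, Nat.cast_add]
        exact add_le_add hpl hql
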